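/- Let ψ ∈ C²(ℝ) have compact support. Then η^ψ is continuously differentiable on (0, ∞) × ℝ in the variables (ρ, u), and there exists a constant C_ψ > 0, depending only on γ and ψ, such that for all ρ > 0 and u ∈ ℝ: |∂_ρη^ψ(ρ, u)| ≤ C_ψ(1 + ρ^θ) and |∂_uη^ψ(ρ, u)| ≤ C_ψ ρ. (In conserved variables (ρ, m), these say |η^ψ_ρ + u η^ψ_m| ≤ C_ψ(1 + ρ^θ) and |η^ψ_m| ≤ C_ψ.) -/

import Mathlib

open Real MeasureTheory

set_option maxHeartbeats 1000000

/-- `θ = (γ − 1)/2`. -/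
noncomputable def thetaExp (γ : ℝ) : ℝ := (γ - 1) / 2

/-- `λ = (3 − γ)/(2(γ − 1))`. -/
noncomputable def lamExp (γ : ℝ) : ℝ := (3 - γ) / (2 * (γ - 1))

/-- The weak entropy of the isentropic Euler system with polytropic pressure, generated by `ψ`:
`η^ψ(ρ, u) = ρ ∫_{−1}^{1} ψ(u + ρ^θ s)(1 − s²)^λ ds`. -/
noncomputable def entropy (γ : ℝ) (ψ : ℝ → ℝ) (ρ u : ℝ) : ℝ :=
  ρ * ∫ s in (-1:ℝ)..1, ψ (u + ρ ^ thetaExp γ * s) * (1 - s ^ 2) ^ lamExp γ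

/-- The weak entropy flux generated by `ψ`:
`q^ψ(ρ, u) = ρ ∫_{−1}^{1} (u + θρ^θ s) ψ(u + ρ^θ s)(1 − s²)^λ ds`. -/
noncomputable def entropyFlux (γ : ℝ) (ψ : ℝ → ℝ) (ρ u : ℝ) : ℝ :=
  ρ * ∫ s in (-1:ℝ)..1,
    (u + thetaExp γ * ρ ^ thetaExp γ * s) * ψ (u + ρ ^ thetaExp γ * s) * (1 - s ^ 2) ^ lamExp γ

/-- Interval integrability of the weight `(1 - s²)^l` on `[-1, 1]` for `l > -1`. -/
lemma weightIntervalIntegrable {l : ℝ} (hl : -1 < l) :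
    IntervalIntegrable (fun s : ℝ => (1 - s ^ 2) ^ l) volume (-1) 1 := by
  have hmeas : Measurable fun s : ℝ => (1 - s ^ 2) ^ l := by fun_prop
  set c : ℝ := max 1 ((2:ℝ) ^ l) with hc
  have hc1 : (1:ℝ) ≤ c := le_max_left _ _
  have hc2 : (2:ℝ) ^ l ≤ c := le_max_right _ _
  have hc0 : (0:ℝ) ≤ c := zero_le_one.trans hc1
  have base : IntervalIntegrable (fun x : ℝ => x ^ l) volume 0 1 :=
    intervalIntegral.intervalIntegrable_rpow' hl
  -- right half
  have half1 : IntervalIntegrable (fun s : ℝ => (1 - s ^ 2) ^ l) volume 0 1 := by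
    have shifted : IntervalIntegrable (fun s : ℝ => (1 - s) ^ l) volume 0 1 := by
      have := base.comp_sub_left 1
      norm_num at this
      exact this.symm
    refine (shifted.const_mul c).mono_fun hmeas.aestronglyMeasurable ?_
    have hIoc : Set.uIoc (0:ℝ) 1 = Set.Ioc 0 1 := Set.uIoc_of_le (by norm_num)
    rw [hIoc]
    filter_upwards [ae_restrict_mem measurableSet_Ioc] with s hs
    obtain ⟨hs0, hs1⟩ := hs
    have h1 : (0:ℝ) ≤ 1 - s := by linarith
    have h2 : (0:ℝ) ≤ 1 + s := by linarith
    have hnn : (0:ℝ) ≤ 1 - s ^ 2 := by nlinarith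
    have hfact : (1 - s ^ 2 : ℝ) = (1 - s) * (1 + s) := by ring
    have hb : (1 + s) ^ l ≤ c := by
      rcases le_or_gt 0 l with h | h
      · exact le_trans (Real.rpow_le_rpow h2 (by linarith) h) hc2
      · exact le_trans (Real.rpow_le_one_of_one_le_of_nonpos (by linarith) h.le) hc1
    simp only [Real.norm_eq_abs]
    rw [abs_of_nonneg (Real.rpow_nonneg hnn _),
      abs_of_nonneg (mul_nonneg hc0 (Real.rpow_nonneg h1 _)), hfact, Real.mul_rpow h1 h2]
    calc (1 - s) ^ l * (1 + s) ^ l ≤ (1 - s) ^ l * c :=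
          mul_le_mul_of_nonneg_left hb (Real.rpow_nonneg h1 l)
      _ = c * (1 - s) ^ l := mul_comm _ _
  -- left half
  have half2 : IntervalIntegrable (fun s : ℝ => (1 - s ^ 2) ^ l) volume (-1) 0 := by
    have shifted : IntervalIntegrable (fun s : ℝ => (1 + s) ^ l) volume (-1) 0 := by
      have := base.comp_add_left 1
      norm_num at this
      exact this
    refine (shifted.const_mul c).mono_fun hmeas.aestronglyMeasurable ?_
    have hIoc : Set.uIoc (-1:ℝ) 0 = Set.Ioc (-1) 0 := Set.uIoc_of_le (by norm_num)
    rw [hIoc]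
    filter_upwards [ae_restrict_mem measurableSet_Ioc] with s hs
    obtain ⟨hs0, hs1⟩ := hs
    have h1 : (0:ℝ) ≤ 1 - s := by linarith
    have h2 : (0:ℝ) ≤ 1 + s := by linarith
    have hnn : (0:ℝ) ≤ 1 - s ^ 2 := by nlinarith
    have hfact : (1 - s ^ 2 : ℝ) = (1 + s) * (1 - s) := by ring
    have hb : (1 - s) ^ l ≤ c := by
      rcases le_or_gt 0 l with h | h
      · exact le_trans (Real.rpow_le_rpow h1 (by linarith) h) hc2
      · exact le_trans (Real.rpow_le_one_of_one_le_of_nonpos (by linarith) h.le) hc1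
    simp only [Real.norm_eq_abs]
    rw [abs_of_nonneg (Real.rpow_nonneg hnn _),
      abs_of_nonneg (mul_nonneg hc0 (Real.rpow_nonneg h2 _)), hfact, Real.mul_rpow h2 h1]
    calc (1 + s) ^ l * (1 - s) ^ l ≤ (1 + s) ^ l * c :=
          mul_le_mul_of_nonneg_left hb (Real.rpow_nonneg h2 l)
      _ = c * (1 + s) ^ l := mul_comm _ _
  exact half2.trans half1

/-- Main work lemma, for general exponents `θ > 0` and `l > -1`. -/
lemma entropy_key (θ l : ℝ) (hθ : 0 < θ) (hl : -1 < l)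
    (ψ : ℝ → ℝ) (hψ : ContDiff ℝ 2 ψ) (hsupp : HasCompactSupport ψ) :
    ContDiffOn ℝ 1
      (fun p : ℝ × ℝ => p.1 * ∫ s in (-1:ℝ)..1, ψ (p.2 + p.1 ^ θ * s) * (1 - s ^ 2) ^ l)
      {p : ℝ × ℝ | 0 < p.1} ∧
    ∃ C : ℝ, 0 < C ∧ ∀ ρ : ℝ, 0 < ρ → ∀ u : ℝ,
      |deriv (fun r => r * ∫ s in (-1:ℝ)..1, ψ (u + r ^ θ * s) * (1 - s ^ 2) ^ l) ρ|
        ≤ C * (1 + ρ ^ θ) ∧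
      |deriv (fun v => ρ * ∫ s in (-1:ℝ)..1, ψ (v + ρ ^ θ * s) * (1 - s ^ 2) ^ l) u| ≤ C * ρ := by
  classical
  -- bounds on ψ and its derivative
  obtain ⟨M₀, hM₀⟩ := hsupp.exists_bound_of_continuous hψ.continuous
  have hψ1 : ContDiff ℝ 1 (deriv ψ) := by
    have h2 : ContDiff ℝ (1 + 1 : ℕ) ψ := by exact_mod_cast hψ
    exact (contDiff_succ_iff_deriv.mp h2).2.2
  obtain ⟨M₁, hM₁⟩ := (hsupp.deriv).exists_bound_of_continuous hψ1.continuous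
  set M : ℝ := max M₀ M₁ with hMdef
  have hMψ : ∀ x, ‖ψ x‖ ≤ M := fun x => (hM₀ x).trans (le_max_left _ _)
  have hMψ' : ∀ x, ‖deriv ψ x‖ ≤ M := fun x => (hM₁ x).trans (le_max_right _ _)
  have hM0 : (0 : ℝ) ≤ M := (norm_nonneg (ψ 0)).trans (hMψ 0)
  have hψdiff : Differentiable ℝ ψ := hψ.differentiable (by norm_num)
  -- the measure
  set μ : Measure ℝ := volume.restrict (Set.Ioc (-1:ℝ) 1) with hμdef
  have hwmeas : Measurable fun s : ℝ => (1 - s ^ 2) ^ l := by fun_prop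
  have hw_int : Integrable (fun s : ℝ => (1 - s ^ 2) ^ l) μ := by
    have := weightIntervalIntegrable hl
    rwa [intervalIntegrable_iff_integrableOn_Ioc_of_le (by norm_num : (-1:ℝ) ≤ 1)] at this
  have hwae : ∀ᵐ s ∂μ, 0 ≤ (1 - s ^ 2) ^ l ∧ |s| ≤ 1 := by
    rw [hμdef]
    filter_upwards [ae_restrict_mem measurableSet_Ioc] with s hs
    refine ⟨Real.rpow_nonneg (by nlinarith [hs.1, hs.2] : (0:ℝ) ≤ 1 - s ^ 2) l, ?_⟩
    rw [abs_le]; exact ⟨hs.1.le, hs.2⟩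
  set K : ℝ := ∫ s, (1 - s ^ 2) ^ l ∂μ with hKdef
  have hK0 : 0 ≤ K := integral_nonneg_of_ae (hwae.mono fun s h => h.1)
  -- G and its derivative candidates
  set G : ℝ × ℝ → ℝ := fun p => ∫ s, ψ (p.2 + p.1 * s) * (1 - s ^ 2) ^ l ∂μ with hGdef
  set A : ℝ → (ℝ × ℝ →L[ℝ] ℝ) :=
    fun s => ContinuousLinearMap.snd ℝ ℝ ℝ + s • ContinuousLinearMap.fst ℝ ℝ ℝ with hAdef
  set F' : ℝ × ℝ → ℝ → (ℝ × ℝ →L[ℝ] ℝ) :=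
    fun p s => (deriv ψ (p.2 + p.1 * s) * (1 - s ^ 2) ^ l) • A s with hF'def
  set L : ℝ × ℝ → (ℝ × ℝ →L[ℝ] ℝ) := fun p => ∫ s, F' p s ∂μ with hLdef
  have hAcont : Continuous A := by
    apply continuous_const.add
    exact continuous_id.smul continuous_const
  have hAnorm : ∀ s : ℝ, |s| ≤ 1 → ‖A s‖ ≤ 2 := by
    intro s hs
    refine ContinuousLinearMap.opNorm_le_bound _ (by norm_num) fun v => ?_
    have hA : A s v = v.2 + s * v.1 := by
      simp [hAdef, smul_eq_mul]
    rw [hA]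
    calc ‖v.2 + s * v.1‖ ≤ ‖v.2‖ + ‖s * v.1‖ := norm_add_le _ _
      _ = ‖v.2‖ + |s| * ‖v.1‖ := by rw [norm_mul]; rfl
      _ ≤ ‖v‖ + 1 * ‖v‖ :=
          add_le_add (norm_snd_le v)
            (mul_le_mul hs (norm_fst_le v) (norm_nonneg _) zero_le_one)
      _ = 2 * ‖v‖ := by ring
  have hF'bound : ∀ᵐ s ∂μ, ∀ p : ℝ × ℝ, ‖F' p s‖ ≤ 2 * M * (1 - s ^ 2) ^ l := by
    filter_upwards [hwae] with s hs p
    simp only [hF'def]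
    calc ‖(deriv ψ (p.2 + p.1 * s) * (1 - s ^ 2) ^ l) • A s‖
        ≤ ‖deriv ψ (p.2 + p.1 * s) * (1 - s ^ 2) ^ l‖ * ‖A s‖ :=
          norm_smul_le (deriv ψ (p.2 + p.1 * s) * (1 - s ^ 2) ^ l) (A s)
      _ = ‖deriv ψ (p.2 + p.1 * s)‖ * ‖(1 - s ^ 2) ^ l‖ * ‖A s‖ := by rw [norm_mul]
      _ ≤ M * (1 - s ^ 2) ^ l * 2 := by
          apply mul_le_mul _ (hAnorm s hs.2) (norm_nonneg _)
            (mul_nonneg hM0 hs.1)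
          apply mul_le_mul (hMψ' _) (le_of_eq (by rw [Real.norm_eq_abs, abs_of_nonneg hs.1]))
            (norm_nonneg _) hM0
      _ = 2 * M * (1 - s ^ 2) ^ l := by ring
  have hF'meas : ∀ p : ℝ × ℝ, AEStronglyMeasurable (F' p) μ := by
    intro p
    apply AEStronglyMeasurable.fun_smul _ hAcont.aestronglyMeasurable
    apply Measurable.aestronglyMeasurable
    exact ((hψ1.continuous.measurable).comp (by fun_prop)).mul hwmeas
  have hFmeas : ∀ p : ℝ × ℝ, AEStronglyMeasurable (fun s => ψ (p.2 + p.1 * s) * (1 - s ^ 2) ^ l) μ := by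
    intro p
    exact (((hψ.continuous.measurable).comp (by fun_prop)).mul hwmeas).aestronglyMeasurable
  have hint : ∀ p : ℝ × ℝ, Integrable (fun s => ψ (p.2 + p.1 * s) * (1 - s ^ 2) ^ l) μ := by
    intro p
    exact hw_int.bdd_mul ((hψ.continuous.comp
      (continuous_const.add (continuous_const.mul continuous_id))).aestronglyMeasurable)
      (c := M) (Filter.Eventually.of_forall fun s => hMψ _)
  have hGFderiv : ∀ p : ℝ × ℝ, HasFDerivAt G (L p) p := by
    intro p
    refine hasFDerivAt_integral_of_dominated_of_fderiv_le (s := Set.univ) Filter.univ_mem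
      (Filter.Eventually.of_forall fun q => hFmeas q) (hint p) (hF'meas p)
      (hF'bound.mono fun s hs q _ => hs q) (hw_int.const_mul (2 * M))
      (Filter.Eventually.of_forall fun s => ?_)
    intro q _
    have hinner : HasFDerivAt (fun q : ℝ × ℝ => q.2 + q.1 * s) (A s) q := by
      have h1 : HasFDerivAt (fun q : ℝ × ℝ => q.1 * s)
          (s • ContinuousLinearMap.fst ℝ ℝ ℝ) q := (hasFDerivAt_fst).mul_const s
      exact (hasFDerivAt_snd).add h1
    have hψd : HasDerivAt ψ (deriv ψ (q.2 + q.1 * s)) (q.2 + q.1 * s) :=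
      (hψdiff _).hasDerivAt
    have hcomp := (hψd.comp_hasFDerivAt q hinner).mul_const ((1 - s ^ 2) ^ l)
    have heq : ((1 - s ^ 2) ^ l) • (deriv ψ (q.2 + q.1 * s) • A s) = F' q s := by
      rw [hF'def, smul_smul, mul_comm]
    rw [← heq]
    exact hcomp
  have hLnorm : ∀ p, ‖L p‖ ≤ 2 * M * K := by
    intro p
    calc ‖L p‖ ≤ ∫ s, 2 * M * (1 - s ^ 2) ^ l ∂μ :=
          norm_integral_le_of_norm_le (hw_int.const_mul _) (hF'bound.mono fun s h => h p)
      _ = 2 * M * K := by rw [hKdef, integral_const_mul]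
  have hGbound : ∀ p, ‖G p‖ ≤ M * K := by
    intro p
    calc ‖G p‖ ≤ ∫ s, M * (1 - s ^ 2) ^ l ∂μ := by
          refine norm_integral_le_of_norm_le (hw_int.const_mul _) ?_
          filter_upwards [hwae] with s hs
          rw [norm_mul]
          exact mul_le_mul (hMψ _) (le_of_eq (by rw [Real.norm_eq_abs, abs_of_nonneg hs.1]))
            (norm_nonneg _) hM0
      _ = M * K := by rw [hKdef, integral_const_mul]
  have hLcont : Continuous L := by
    refine continuous_of_dominated hF'meas (fun p => hF'bound.mono fun s h => h p)
      (hw_int.const_mul (2 * M)) (Filter.Eventually.of_forall fun s => ?_)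
    exact ((hψ1.continuous.comp
      (continuous_snd.add (continuous_fst.mul continuous_const))).mul
      continuous_const).smul continuous_const
  have hGC1 : ContDiff ℝ 1 G := by
    rw [contDiff_one_iff_fderiv]
    refine ⟨fun p => (hGFderiv p).differentiableAt, ?_⟩
    have : fderiv ℝ G = L := funext fun p => (hGFderiv p).fderiv
    rw [this]; exact hLcont
  -- representation of the interval integral
  have hrepr : ∀ (a u : ℝ), (∫ s in (-1:ℝ)..1, ψ (u + a * s) * (1 - s ^ 2) ^ l) = G (a, u) := by
    intro a u
    rw [intervalIntegral.integral_of_le (by norm_num : (-1:ℝ) ≤ 1)]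
  constructor
  · -- C¹ smoothness
    intro p hp
    have hp1 : (0:ℝ) < p.1 := hp
    have h1 : ContDiffAt ℝ 1 (fun q : ℝ × ℝ => q.1 * G (q.1 ^ θ, q.2)) p := by
      have ha : ContDiffAt ℝ 1 (fun x : ℝ => x ^ θ) p.1 :=
        Real.contDiffAt_rpow_const_of_ne (ne_of_gt hp1)
      have hb : ContDiffAt ℝ 1 (fun q : ℝ × ℝ => q.1 ^ θ) p := ha.comp p contDiffAt_fst
      exact contDiffAt_fst.mul ((hGC1.contDiffAt).comp p (hb.prodMk contDiffAt_snd))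
    have heq : (fun q : ℝ × ℝ => q.1 * ∫ s in (-1:ℝ)..1, ψ (q.2 + q.1 ^ θ * s) * (1 - s ^ 2) ^ l)
        = fun q : ℝ × ℝ => q.1 * G (q.1 ^ θ, q.2) := by
      funext q; rw [hrepr]
    rw [heq]
    exact h1.contDiffWithinAt
  · -- derivative bounds
    refine ⟨M * K * (2 * θ + 2) + 1, by positivity, fun ρ hρ u => ?_⟩
    have hρθ : (0:ℝ) ≤ ρ ^ θ := Real.rpow_nonneg hρ.le θ
    have hGd := hGFderiv (ρ ^ θ, u)
    constructor
    · -- ρ-derivative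
      have hpow : HasDerivAt (fun r : ℝ => r ^ θ) (θ * ρ ^ (θ - 1)) ρ :=
        Real.hasDerivAt_rpow_const (Or.inl hρ.ne')
      have hin : HasDerivAt (fun r : ℝ => (r ^ θ, u)) ((θ * ρ ^ (θ - 1), 0) : ℝ × ℝ) ρ :=
        hpow.prodMk (hasDerivAt_const ρ u)
      have hcomp : HasDerivAt (fun r => G (r ^ θ, u))
          (L (ρ ^ θ, u) (θ * ρ ^ (θ - 1), 0)) ρ := by
          have := hGd.comp_hasDerivAt ρ hin; exact this
      have hfull : HasDerivAt (fun r => r * G (r ^ θ, u))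
          (1 * G (ρ ^ θ, u) + ρ * L (ρ ^ θ, u) (θ * ρ ^ (θ - 1), 0)) ρ :=
        (hasDerivAt_id ρ).mul hcomp
      have heq1 : (fun r : ℝ => r * ∫ s in (-1:ℝ)..1, ψ (u + r ^ θ * s) * (1 - s ^ 2) ^ l)
          = fun r => r * G (r ^ θ, u) := by funext r; rw [hrepr]
      rw [heq1, hfull.deriv]
      have hvn : ‖((θ * ρ ^ (θ - 1), 0) : ℝ × ℝ)‖ = θ * ρ ^ (θ - 1) := by
        have h1 : (0:ℝ) ≤ θ * ρ ^ (θ - 1) := mul_nonneg hθ.le (Real.rpow_nonneg hρ.le _)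
        simp only [Prod.norm_def, Real.norm_eq_abs, norm_zero]
        rw [sup_eq_left.mpr (abs_nonneg _), abs_of_nonneg h1]
      have hterm : ‖L (ρ ^ θ, u) (θ * ρ ^ (θ - 1), 0)‖ ≤ 2 * M * K * (θ * ρ ^ (θ - 1)) := by
        calc ‖L (ρ ^ θ, u) (θ * ρ ^ (θ - 1), 0)‖
            ≤ ‖L (ρ ^ θ, u)‖ * ‖((θ * ρ ^ (θ - 1), 0) : ℝ × ℝ)‖ :=
              ContinuousLinearMap.le_opNorm _ _
          _ ≤ 2 * M * K * (θ * ρ ^ (θ - 1)) := by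
              rw [hvn]
              exact mul_le_mul_of_nonneg_right (hLnorm _)
                (mul_nonneg hθ.le (Real.rpow_nonneg hρ.le _))
      have hrr : ρ * ρ ^ (θ - 1) = ρ ^ θ := by
        have h := (Real.rpow_add hρ 1 (θ - 1)).symm
        rw [Real.rpow_one] at h
        rw [h]
        congr 1
        ring
      have hG1 : |G (ρ ^ θ, u)| ≤ M * K := by
        rw [← Real.norm_eq_abs]; exact hGbound _
      have hLv : |L (ρ ^ θ, u) (θ * ρ ^ (θ - 1), 0)| ≤ 2 * M * K * (θ * ρ ^ (θ - 1)) := by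
        rw [← Real.norm_eq_abs]; exact hterm
      calc |1 * G (ρ ^ θ, u) + ρ * L (ρ ^ θ, u) (θ * ρ ^ (θ - 1), 0)|
          ≤ |1 * G (ρ ^ θ, u)| + |ρ * L (ρ ^ θ, u) (θ * ρ ^ (θ - 1), 0)| := abs_add_le _ _
        _ ≤ M * K + ρ * (2 * M * K * (θ * ρ ^ (θ - 1))) := by
            rw [one_mul, abs_mul, abs_of_pos hρ]
            exact add_le_add hG1 (mul_le_mul_of_nonneg_left hLv hρ.le)
        _ = M * K + 2 * M * K * θ * ρ ^ θ := by rw [← hrr]; ring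
        _ ≤ (M * K * (2 * θ + 2) + 1) * (1 + ρ ^ θ) := by
            nlinarith [mul_nonneg hM0 hK0, mul_nonneg (mul_nonneg hM0 hK0) hρθ,
              mul_nonneg (mul_nonneg (mul_nonneg hM0 hK0) hθ.le) hρθ,
              mul_nonneg (mul_nonneg hM0 hK0) hθ.le]
    · -- u-derivative
      have hin2 : HasDerivAt (fun v : ℝ => ((ρ ^ θ : ℝ), v)) (((0:ℝ), (1:ℝ)) : ℝ × ℝ) u :=
        (hasDerivAt_const u (ρ ^ θ)).prodMk (hasDerivAt_id u)
      have hcomp2 : HasDerivAt (fun v => G (ρ ^ θ, v)) (L (ρ ^ θ, u) (0, 1)) u :=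
        hGd.comp_hasDerivAt u hin2
      have hfull2 : HasDerivAt (fun v => ρ * G (ρ ^ θ, v)) (ρ * L (ρ ^ θ, u) (0, 1)) u :=
        hcomp2.const_mul ρ
      have heq2 : (fun v : ℝ => ρ * ∫ s in (-1:ℝ)..1, ψ (v + ρ ^ θ * s) * (1 - s ^ 2) ^ l)
          = fun v => ρ * G (ρ ^ θ, v) := by funext v; rw [hrepr]
      rw [heq2, hfull2.deriv]
      have hvn : ‖(((0:ℝ), (1:ℝ)) : ℝ × ℝ)‖ = 1 := by
        simp [Prod.norm_def]
      have hLv : |L (ρ ^ θ, u) (0, 1)| ≤ 2 * M * K := by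
        rw [← Real.norm_eq_abs]
        calc ‖L (ρ ^ θ, u) (0, 1)‖ ≤ ‖L (ρ ^ θ, u)‖ * ‖(((0:ℝ), (1:ℝ)) : ℝ × ℝ)‖ :=
              ContinuousLinearMap.le_opNorm _ _
          _ ≤ 2 * M * K := by rw [hvn, mul_one]; exact hLnorm _
      calc |ρ * L (ρ ^ θ, u) (0, 1)| = ρ * |L (ρ ^ θ, u) (0, 1)| := by
            rw [abs_mul, abs_of_pos hρ]
        _ ≤ ρ * (2 * M * K) := mul_le_mul_of_nonneg_left hLv hρ.le
        _ ≤ (M * K * (2 * θ + 2) + 1) * ρ := by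
            nlinarith [mul_nonneg hM0 hK0, mul_nonneg (mul_nonneg hM0 hK0) hθ.le]
  
theorem entropy_compactSupport_deriv_bounds (γ : ℝ) (hγ : 1 < γ)
    (ψ : ℝ → ℝ) (hψ : ContDiff ℝ 2 ψ) (hsupp : HasCompactSupport ψ) :
    ContDiffOn ℝ 1 (fun p : ℝ × ℝ => entropy γ ψ p.1 p.2) {p : ℝ × ℝ | 0 < p.1} ∧
    ∃ C : ℝ, 0 < C ∧ ∀ ρ : ℝ, 0 < ρ → ∀ u : ℝ,
      |deriv (fun r => entropy γ ψ r u) ρ| ≤ C * (1 + ρ ^ thetaExp γ) ∧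
      |deriv (fun v => entropy γ ψ ρ v) u| ≤ C * ρ := by
  have hθ : 0 < thetaExp γ := by unfold thetaExp; linarith
  have hl : -1 < lamExp γ := by
    unfold lamExp
    rw [lt_div_iff₀ (by linarith : (0:ℝ) < 2 * (γ - 1))]
    nlinarith
  simpa only [entropy] using entropy_key (thetaExp γ) (lamExp γ) hθ hl ψ hψ hsupp
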